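/- The scheme IR' is derivable semantically: in any PIL model M and state s, if M,s ⊨ Kv(c) and M,s ⊨ φ, then M,s ⊨ [c]φ. -/

import Mathlib

structure PILModel (Cst : Type) where
  S : Type
  D : Type
  S_ne : Nonempty S
  D_ne : Nonempty D
  V : S → Cst → D

inductive Form (Cst : Type) : Type where
  | top  : Form Cst
  | neg  : Form Cst → Form Cst
  | conj : Form Cst → Form Cst → Form Cst
  | Kv   : Cst → Form Cst
  | box  : Cst → Form Cst → Form Cst

def PILModel.restrict {Cst} (M : PILModel Cst) (s : M.S) (c : Cst) : PILModel Cst where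
  S := { t : M.S // M.V s c = M.V t c }
  D := M.D
  S_ne := ⟨⟨s, rfl⟩⟩
  D_ne := M.D_ne
  V := fun t d => M.V t.1 d

def Sat {Cst} : (M : PILModel Cst) → M.S → Form Cst → Prop
  | _, _, .top => True
  | M, s, .neg φ => ¬ Sat M s φ
  | M, s, .conj φ ψ => Sat M s φ ∧ Sat M s ψ
  | M, s, .Kv c => ∀ t : M.S, M.V s c = M.V t c
  | M, s, .box c φ => Sat (M.restrict s c) ⟨s, rfl⟩ φ

lemma sat_congr {Cst : Type} (φ : Form Cst) :
    ∀ (M N : PILModel Cst) (e : M.S ≃ N.S) (f : M.D → N.D),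
    Function.Injective f →
    (∀ s c, f (M.V s c) = N.V (e s) c) →
    ∀ s : M.S, (Sat M s φ ↔ Sat N (e s) φ) := by
  induction φ with
  | top => intros; simp [Sat]
  | neg φ ih =>
      intro M N e f hf hV s
      simpa [Sat] using not_congr (ih M N e f hf hV s)
  | conj φ ψ ihφ ihψ =>
      intro M N e f hf hV s
      simpa [Sat] using and_congr (ihφ M N e f hf hV s) (ihψ M N e f hf hV s)
  | Kv c =>
      intro M N e f hf hV s
      simp only [Sat]
      constructor
      · intro h t
        have := congrArg f (h (e.symm t))
        rwa [hV, hV, e.apply_symm_apply] at this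
      · intro h t
        apply hf
        rw [hV, hV]
        exact h (e t)
  | box c φ ih =>
      intro M N e f hf hV s
      simp only [Sat]
      exact ih (M.restrict s c) (N.restrict (e s) c)
        { toFun := fun t => ⟨e t.1, by
            have := congrArg f t.2; rwa [hV, hV] at this⟩
          invFun := fun t => ⟨e.symm t.1, by
            apply hf; rw [hV, hV, e.apply_symm_apply]; exact t.2⟩
          left_inv := fun t => by simp; rfl
          right_inv := fun t => by simp; rfl }
        f hf (fun t d => hV t.1 d) ⟨s, rfl⟩

/-- IR': if Kv(c) and φ hold at s, then [c]φ holds at s. -/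
theorem ir'_valid {Cst : Type} (M : PILModel Cst) (s : M.S) (c : Cst) (φ : Form Cst)
    (hKv : Sat M s (Form.Kv c)) (hφ : Sat M s φ) : Sat M s (Form.box c φ) := by
  have := sat_congr φ (M.restrict s c) M (Equiv.subtypeUnivEquiv hKv) id
    (fun _ _ h => h) (fun t d => rfl) ⟨s, rfl⟩
  exact this.mpr hφ
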